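/- The metric dimension of the incidence graph of the Möbius plane of order 2 (points {1,...,5}, circles all 3-element subsets) equals 4; moreover every 4-element subset of the point set is a resolving set. -/

import Mathlib

open Finset

/-- Vertices of the incidence graph of the Möbius plane of order 2: the 5 points
and the 10 circles (all 3-element subsets of a 5-element set). -/
abbrev MobiusTwoVertex := Fin 5 ⊕ {z : Finset (Fin 5) // z.card = 3}

/-- The point–circle incidence graph of the Möbius plane of order 2. -/
def mobiusTwoGraph : SimpleGraph MobiusTwoVertex where
  Adj v w :=
    (∃ p z, v = Sum.inl p ∧ w = Sum.inr z ∧ p ∈ z.1) ∨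
    (∃ p z, v = Sum.inr z ∧ w = Sum.inl p ∧ p ∈ z.1)
  symm := by
    constructor
    intro v w h
    rcases h with ⟨p, z, h1, h2, h3⟩ | ⟨p, z, h1, h2, h3⟩
    · exact Or.inr ⟨p, z, h2, h1, h3⟩
    · exact Or.inl ⟨p, z, h2, h1, h3⟩
  loopless := by
    constructor
    intro v h
    rcases h with ⟨p, z, h1, h2, _⟩ | ⟨p, z, h1, h2, _⟩ <;> subst h1 <;> simp_all

def mD : MobiusTwoVertex → MobiusTwoVertex → ℕ
  | Sum.inl p, Sum.inl q => if p = q then 0 else 2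
  | Sum.inl p, Sum.inr z => if p ∈ z.1 then 1 else 3
  | Sum.inr z, Sum.inl p => if p ∈ z.1 then 1 else 3
  | Sum.inr z, Sum.inr w => if z = w then 0 else 2

def mC : MobiusTwoVertex → ℕ
  | Sum.inl _ => 0
  | Sum.inr _ => 1

lemma adjPZ {p z} (h : p ∈ z.1) : mobiusTwoGraph.Adj (Sum.inl p) (Sum.inr z) :=
  Or.inl ⟨p, z, rfl, rfl, h⟩

lemma adjZP {p z} (h : p ∈ z.1) : mobiusTwoGraph.Adj (Sum.inr z) (Sum.inl p) :=
  Or.inr ⟨p, z, rfl, rfl, h⟩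

lemma adj_color {u v} (h : mobiusTwoGraph.Adj u v) : mC u + mC v = 1 := by
  rcases h with ⟨p, z, h1, h2, _⟩ | ⟨p, z, h1, h2, _⟩ <;> subst h1 <;> subst h2 <;> rfl

lemma walk_parity {u v} (p : mobiusTwoGraph.Walk u v) : (p.length + mC u + mC v) % 2 = 0 := by
  induction p with
  | nil => simp [Nat.add_mod_right]; omega
  | cons h q ih =>
      have := adj_color h
      simp only [SimpleGraph.Walk.length_cons]
      omega

lemma not_adj_ll (p q : Fin 5) : ¬ mobiusTwoGraph.Adj (Sum.inl p) (Sum.inl q) := by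
  rintro (⟨a, b, h1, h2, _⟩ | ⟨a, b, h1, h2, _⟩) <;> simp_all

lemma not_adj_rr (z w) : ¬ mobiusTwoGraph.Adj (Sum.inr z) (Sum.inr w) := by
  rintro (⟨a, b, h1, h2, _⟩ | ⟨a, b, h1, h2, _⟩) <;> simp_all

lemma not_adj_lr {p z} (h : p ∉ z.1) : ¬ mobiusTwoGraph.Adj (Sum.inl p) (Sum.inr z) := by
  rintro (⟨a, b, h1, h2, hm⟩ | ⟨a, b, h1, h2, _⟩) <;> simp_all

lemma exists_circle (p q : Fin 5) (h : p ≠ q) :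
    ∃ z : Finset (Fin 5), z.card = 3 ∧ p ∈ z ∧ q ∈ z := by
  revert h; revert p q; decide

lemma exists_common (z w : Finset (Fin 5)) (hz : z.card = 3) (hw : w.card = 3) :
    ∃ p, p ∈ z ∧ p ∈ w := by
  revert hz hw; revert z w; decide

lemma distPP (p q : Fin 5) : mobiusTwoGraph.dist (Sum.inl p) (Sum.inl q) = mD (Sum.inl p) (Sum.inl q) := by
    by_cases h : p = q
    · subst h; simp [mD, SimpleGraph.dist_self]
    · obtain ⟨z, hz, hp, hq⟩ := exists_circle p q h
      let w : mobiusTwoGraph.Walk (Sum.inl p) (Sum.inl q) :=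
        SimpleGraph.Walk.cons (adjPZ (z := ⟨z, hz⟩) hp)
          (SimpleGraph.Walk.cons (adjZP (z := ⟨z, hz⟩) hq) SimpleGraph.Walk.nil)
      have hle : mobiusTwoGraph.dist (Sum.inl p) (Sum.inl q) ≤ 2 := by
        have h := SimpleGraph.dist_le w
        simpa [w] using h
      have h0 : mobiusTwoGraph.dist (Sum.inl p) (Sum.inl q) ≠ 0 := by
        rw [Ne, SimpleGraph.dist_eq_zero_iff_eq_or_not_reachable]
        push_neg
        exact ⟨by simp [h], ⟨w⟩⟩
      have h1 : mobiusTwoGraph.dist (Sum.inl p) (Sum.inl q) ≠ 1 := by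
        rw [Ne, SimpleGraph.dist_eq_one_iff_adj]
        exact not_adj_ll p q
      simp only [mD, if_neg h]
      omega
lemma distPZ (p : Fin 5) (z : {z : Finset (Fin 5) // z.card = 3}) :
    mobiusTwoGraph.dist (Sum.inl p) (Sum.inr z) = mD (Sum.inl p) (Sum.inr z) := by
    by_cases h : p ∈ z.1
    · simp [mD, if_pos h, SimpleGraph.dist_eq_one_iff_adj.mpr (adjPZ h)]
    · obtain ⟨q, hq⟩ := Finset.card_pos.mp (by rw [z.2]; norm_num)
      have hpq : p ≠ q := fun e => h (e ▸ hq)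
      obtain ⟨y, hy, hp, hq'⟩ := exists_circle p q hpq
      let w : mobiusTwoGraph.Walk (Sum.inl p) (Sum.inr z) :=
        SimpleGraph.Walk.cons (adjPZ (z := ⟨y, hy⟩) hp)
          (SimpleGraph.Walk.cons (adjZP (z := ⟨y, hy⟩) hq')
            (SimpleGraph.Walk.cons (adjPZ hq) SimpleGraph.Walk.nil))
      have hle : mobiusTwoGraph.dist (Sum.inl p) (Sum.inr z) ≤ 3 := by
        have h := SimpleGraph.dist_le w
        simpa [w] using h
      have h0 : mobiusTwoGraph.dist (Sum.inl p) (Sum.inr z) ≠ 0 := by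
        rw [Ne, SimpleGraph.dist_eq_zero_iff_eq_or_not_reachable]
        push_neg
        exact ⟨by simp, ⟨w⟩⟩
      have h1 : mobiusTwoGraph.dist (Sum.inl p) (Sum.inr z) ≠ 1 := by
        rw [Ne, SimpleGraph.dist_eq_one_iff_adj]
        exact not_adj_lr h
      have h2 : mobiusTwoGraph.dist (Sum.inl p) (Sum.inr z) ≠ 2 := by
        intro he
        obtain ⟨w', hw'⟩ := mobiusTwoGraph.exists_walk_of_dist_ne_zero h0
        have := walk_parity w'
        rw [hw', he] at this
        simp [mC] at this
      simp only [mD, if_neg h]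
      omega
lemma distZZ (z w : {z : Finset (Fin 5) // z.card = 3}) :
    mobiusTwoGraph.dist (Sum.inr z) (Sum.inr w) = mD (Sum.inr z) (Sum.inr w) := by
    by_cases h : z = w
    · subst h; simp [mD, SimpleGraph.dist_self]
    · obtain ⟨p, hp, hp'⟩ := exists_common z.1 w.1 z.2 w.2
      let wk : mobiusTwoGraph.Walk (Sum.inr z) (Sum.inr w) :=
        SimpleGraph.Walk.cons (adjZP hp) (SimpleGraph.Walk.cons (adjPZ hp') SimpleGraph.Walk.nil)
      have hle : mobiusTwoGraph.dist (Sum.inr z) (Sum.inr w) ≤ 2 := by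
        have h := SimpleGraph.dist_le wk
        simpa [wk] using h
      have h0 : mobiusTwoGraph.dist (Sum.inr z) (Sum.inr w) ≠ 0 := by
        rw [Ne, SimpleGraph.dist_eq_zero_iff_eq_or_not_reachable]
        push_neg
        exact ⟨by simp [h], ⟨wk⟩⟩
      have h1 : mobiusTwoGraph.dist (Sum.inr z) (Sum.inr w) ≠ 1 := by
        rw [Ne, SimpleGraph.dist_eq_one_iff_adj]
        exact not_adj_rr z w
      simp only [mD, if_neg h]
      omega

lemma dist_eq (u v : MobiusTwoVertex) : mobiusTwoGraph.dist u v = mD u v := by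
  match u, v with
  | Sum.inl p, Sum.inl q => exact distPP p q
  | Sum.inl p, Sum.inr z => exact distPZ p z
  | Sum.inr z, Sum.inl p =>
    rw [SimpleGraph.dist_comm, distPZ p z]; simp [mD]
  | Sum.inr z, Sum.inr w => exact distZZ z w

lemma card_circles : Fintype.card {z : Finset (Fin 5) // z.card = 3} = 10 := by decide

theorem part1' (S : Finset MobiusTwoVertex)
    (hS : ∀ u v : MobiusTwoVertex, u ≠ v → ∃ s ∈ S, mD u s ≠ mD v s) : 4 ≤ S.card := by
  classical
  by_contra hlt
  push_neg at hlt
  set A : Finset (Fin 5) := univ.filter (fun t => Sum.inl t ∈ S) with hA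
  set B : Finset {z : Finset (Fin 5) // z.card = 3} :=
    univ.filter (fun z => Sum.inr z ∈ S) with hB
  -- |A| + |B| ≤ |S|
  have hsub : (A.image Sum.inl ∪ B.image Sum.inr : Finset MobiusTwoVertex) ⊆ S := by
    intro x hx
    simp only [mem_union, mem_image, hA, hB, mem_filter, mem_univ, true_and] at hx
    rcases hx with ⟨t, ht, rfl⟩ | ⟨z, hz, rfl⟩ <;> assumption
  have hdisj : Disjoint (A.image Sum.inl) (B.image Sum.inr : Finset MobiusTwoVertex) := by
    simp only [disjoint_left, mem_image]
    rintro x ⟨t, _, rfl⟩ ⟨z, _, h⟩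
    exact Sum.inr_ne_inl h
  have hAB : A.card + B.card ≤ S.card := by
    rw [← card_image_of_injective A (Sum.inl_injective (α := Fin 5) (β := {z : Finset (Fin 5) // z.card = 3})),
      ← card_image_of_injective B (Sum.inr_injective (α := Fin 5) (β := {z : Finset (Fin 5) // z.card = 3})), ← card_union_of_disjoint hdisj]
    exact card_le_card hsub
  -- trace map injective off B
  have hinj : Set.InjOn (fun z : {z : Finset (Fin 5) // z.card = 3} => z.1 ∩ A)
      (univ \ B : Finset _) := by
    intro z hz w hw heq
    replace heq : z.1 ∩ A = w.1 ∩ A := heq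
    replace hz : z ∈ univ \ B := Finset.mem_coe.mp hz
    replace hw : w ∈ univ \ B := Finset.mem_coe.mp hw
    by_contra hne
    obtain ⟨s, hsS, hd⟩ := hS (Sum.inr z) (Sum.inr w) (by simp [hne])
    match s with
    | Sum.inl t =>
      have htA : t ∈ A := by simp [hA, hsS]
      have : t ∈ z.1 ↔ t ∈ w.1 := by
        constructor <;> intro h
        · have : t ∈ z.1 ∩ A := mem_inter.mpr ⟨h, htA⟩
          rw [heq] at this; exact (mem_inter.mp this).1
        · have : t ∈ w.1 ∩ A := mem_inter.mpr ⟨h, htA⟩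
          rw [← heq] at this; exact (mem_inter.mp this).1
      simp only [mD] at hd
      by_cases h : t ∈ z.1
      · rw [if_pos h, if_pos (this.mp h)] at hd; exact hd rfl
      · rw [if_neg h, if_neg (fun h' => h (this.mpr h'))] at hd; exact hd rfl
    | Sum.inr y =>
      have hyB : y ∈ B := by simp [hB, hsS]
      have hyz : z ≠ y := fun e => (mem_sdiff.mp hz).2 (e ▸ hyB)
      have hyw : w ≠ y := fun e => (mem_sdiff.mp hw).2 (e ▸ hyB)
      simp only [mD, if_neg hyz, if_neg hyw] at hd
      exact hd rfl
  have hmaps : ∀ z ∈ (univ \ B : Finset _),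
      (fun z : {z : Finset (Fin 5) // z.card = 3} => z.1 ∩ A) z ∈ A.powerset := by
    intro z _
    exact mem_powerset.mpr inter_subset_right
  have hcount : (univ \ B : Finset _).card ≤ A.powerset.card :=
    card_le_card_of_injOn _ hmaps hinj
  rw [card_sdiff_of_subset (subset_univ B), card_univ, card_circles, card_powerset] at hcount
  have hBle : B.card ≤ 10 := by
    calc B.card ≤ (univ : Finset {z : Finset (Fin 5) // z.card = 3}).card := card_le_card (subset_univ B)
    _ = 10 := by rw [card_univ, card_circles]
  have hA3 : A.card ≤ 3 := by omega
  have hpow : 2 ^ A.card ≤ 2 ^ 3 := Nat.pow_le_pow_right (by norm_num) hA3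
  have : B.card ≥ 2 := by omega
  have hA1 : A.card ≤ 1 := by omega
  have hpow1 : 2 ^ A.card ≤ 2 ^ 1 := Nat.pow_le_pow_right (by norm_num) hA1
  omega

/-- A set of vertices is resolving if any two distinct vertices have different
distance to some element of the set. -/
def MobiusTwoResolving (S : Finset MobiusTwoVertex) : Prop :=
  ∀ u v : MobiusTwoVertex, u ≠ v →
    ∃ s ∈ S, mobiusTwoGraph.dist u s ≠ mobiusTwoGraph.dist v s

lemma res_iff (S : Finset MobiusTwoVertex) :
    MobiusTwoResolving S ↔ ∀ u v : MobiusTwoVertex, u ≠ v → ∃ s ∈ S, mD u s ≠ mD v s := by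
  unfold MobiusTwoResolving
  simp only [dist_eq]

/-- The metric dimension of the incidence graph of the Möbius plane of order 2 is 4:
every resolving set has at least 4 elements, and every 4-element subset of the point
set is a resolving set. -/
theorem mobius_two_metric_dimension :
    (∀ S : Finset MobiusTwoVertex, MobiusTwoResolving S → 4 ≤ S.card) ∧
    (∀ T : Finset (Fin 5), T.card = 4 →
      MobiusTwoResolving (T.map ⟨Sum.inl, Sum.inl_injective⟩)) := by
  constructor
  · intro S hS
    exact part1' S ((res_iff S).mp hS)
  · simp only [res_iff]
    decide
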